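/- Let p, q, d, T be positive integers with d < q, and let r ≥ 0, m > 0, c > 0 be real numbers. Let (x_1, y_1), …, (x_T, y_T) be a sequence with x_t ∈ ℝ^p, ‖x_t‖₂² ≤ r, and y_t ∈ {0,1}^q; for each t let y^{(t)} ∈ {0,1}^q be the label vector of the nearest neighbour used on round t. Let P ∈ ℝ^{p×q}, let V_1, …, V_{T+1} ∈ ℝ^{q×d} with V_1 nonzero, let U ∈ ℝ^{q×d}, and let λ_1, …, λ_T ∈ ℝ with λ_t ≥ m. Define the per-round loss l_t = max{0, ‖y_t − y^{(t)}‖₁ − (‖V_tᵀPᵀx_t − V_tᵀy^{(t)}‖₂² − ‖V_tᵀPᵀx_t − V_tᵀy_t‖₂²)}. Suppose that for every t the progress Ψ_t = ‖V_t − U‖_F² − ‖V_{t+1} − U‖_F² satisfies Ψ_t ≥ c²λ_t‖V_t‖_F² + q·c²·λ_t/(‖P‖_F²·r + q), and that ‖Pᵀx_t − y_t‖₂² ≤ ‖P‖_F²·r + q for every t. Then the cumulative loss is bounded as ∑_{t=1}^T l_t ≤ ‖V_1 − U‖_F²·(‖P‖_F²·r + q)/(m·c²). -/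

import Mathlib

open Matrix

/-- Squared Frobenius norm of a real matrix: `‖A‖_F² = ∑ i j, A i j ^ 2`. -/
noncomputable def frobSq {m n : ℕ} (A : Matrix (Fin m) (Fin n) ℝ) : ℝ :=
  ∑ i, ∑ j, (A i j) ^ 2

/-- Squared Euclidean norm on `ℝ^n`: `‖v‖₂² = ∑ i, v i ^ 2`. -/
noncomputable def l2normSq {n : ℕ} (v : Fin n → ℝ) : ℝ := ∑ i, (v i) ^ 2

/-- ℓ₁ norm on `ℝ^n`: `‖v‖₁ = ∑ i, |v i|`. -/
noncomputable def l1norm {n : ℕ} (v : Fin n → ℝ) : ℝ := ∑ i, |v i|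

lemma frobSq_nonneg {m n : ℕ} (A : Matrix (Fin m) (Fin n) ℝ) : 0 ≤ frobSq A :=
  Finset.sum_nonneg fun _ _ => Finset.sum_nonneg fun _ _ => sq_nonneg _

lemma l2normSq_nonneg {n : ℕ} (v : Fin n → ℝ) : 0 ≤ l2normSq v :=
  Finset.sum_nonneg fun _ _ => sq_nonneg _

lemma cs_bound {q d : ℕ} (A : Matrix (Fin q) (Fin d) ℝ) (z : Fin q → ℝ) :
    l2normSq (Aᵀ.mulVec z) ≤ frobSq A * l2normSq z := by
  unfold l2normSq frobSq
  have h : ∀ j : Fin d, (∑ i, Aᵀ j i * z i) ^ 2 ≤ (∑ i, (A i j) ^ 2) * (∑ i, (z i) ^ 2) := by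
    intro j
    simpa [Matrix.transpose_apply] using
      Finset.sum_mul_sq_le_sq_mul_sq Finset.univ (fun i => A i j) z
  calc ∑ j, (Aᵀ.mulVec z j) ^ 2 ≤ ∑ j, (∑ i, (A i j) ^ 2) * (∑ i, (z i) ^ 2) := by
        apply Finset.sum_le_sum; intro j _
        simpa [Matrix.mulVec, dotProduct] using h j
    _ = (∑ i, ∑ j, (A i j) ^ 2) * (∑ i, (z i) ^ 2) := by
        rw [← Finset.sum_mul, Finset.sum_comm]

lemma tele (f : ℕ → ℝ) (T : ℕ) :
    ∑ t ∈ Finset.Icc 1 T, (f t - f (t + 1)) = f 1 - f (T + 1) := by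
  induction T with
  | zero => simp
  | succ n ih =>
    rw [Finset.sum_Icc_succ_top (Nat.le_add_left 1 n), ih]; ring

/-- Theorem 1: cumulative loss bound for the online metric learning algorithm.
With per-round loss
`l_t = max{0, ‖y_t − y⁽ᵗ⁾‖₁ − (‖V_tᵀPᵀx_t − V_tᵀy⁽ᵗ⁾‖₂² − ‖V_tᵀPᵀx_t − V_tᵀy_t‖₂²)}`,
per-round progress `Ψ_t ≥ c²λ_t‖V_t‖_F² + q c² λ_t/(‖P‖_F² r + q)`, `λ_t ≥ m`, and
`‖Pᵀx_t − y_t‖₂² ≤ ‖P‖_F² r + q`, the cumulative loss satisfies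
`∑_{t=1}^T l_t ≤ ‖V_1 − U‖_F² (‖P‖_F² r + q)/(m c²)`. -/
theorem cumulative_loss_bound {p q d : ℕ}
    (hp : 0 < p) (hq : 0 < q) (hd : 0 < d) (hdq : d < q)
    (T : ℕ) (hT : 0 < T)
    (r m c : ℝ) (hr : 0 ≤ r) (hm : 0 < m) (hc : 0 < c)
    (x : ℕ → Fin p → ℝ) (yt : ℕ → Fin q → ℝ) (ynn : ℕ → Fin q → ℝ)
    (hx : ∀ t ∈ Finset.Icc 1 T, (∑ i, (x t i) ^ 2) ≤ r)
    (hyt : ∀ t ∈ Finset.Icc 1 T, ∀ i, yt t i = 0 ∨ yt t i = 1)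
    (hynn : ∀ t ∈ Finset.Icc 1 T, ∀ i, ynn t i = 0 ∨ ynn t i = 1)
    (P : Matrix (Fin p) (Fin q) ℝ)
    (V : ℕ → Matrix (Fin q) (Fin d) ℝ) (hV1 : V 1 ≠ 0)
    (U : Matrix (Fin q) (Fin d) ℝ)
    (lam : ℕ → ℝ) (hlam : ∀ t ∈ Finset.Icc 1 T, m ≤ lam t)
    (hprog : ∀ t ∈ Finset.Icc 1 T,
      c ^ 2 * lam t * frobSq (V t) + (q : ℝ) * c ^ 2 * lam t / (frobSq P * r + q)
        ≤ frobSq (V t - U) - frobSq (V (t + 1) - U))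
    (hPx : ∀ t ∈ Finset.Icc 1 T,
      l2normSq (Pᵀ.mulVec (x t) - yt t) ≤ frobSq P * r + q) :
    ∑ t ∈ Finset.Icc 1 T,
        max 0 (l1norm (yt t - ynn t)
          - (l2normSq ((V t)ᵀ.mulVec (Pᵀ.mulVec (x t)) - (V t)ᵀ.mulVec (ynn t))
              - l2normSq ((V t)ᵀ.mulVec (Pᵀ.mulVec (x t)) - (V t)ᵀ.mulVec (yt t))))
      ≤ frobSq (V 1 - U) * (frobSq P * r + q) / (m * c ^ 2) := by
  set R : ℝ := frobSq P * r + q with hRdef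
  have hRq : (q : ℝ) ≤ R := by
    have := mul_nonneg (frobSq_nonneg P) hr; linarith
  have hR : 0 < R := lt_of_lt_of_le (by exact_mod_cast hq) hRq
  -- per-round bound
  have key : ∀ t ∈ Finset.Icc 1 T,
      max 0 (l1norm (yt t - ynn t)
          - (l2normSq ((V t)ᵀ.mulVec (Pᵀ.mulVec (x t)) - (V t)ᵀ.mulVec (ynn t))
              - l2normSq ((V t)ᵀ.mulVec (Pᵀ.mulVec (x t)) - (V t)ᵀ.mulVec (yt t))))
        ≤ (R / (m * c ^ 2)) *
          (c ^ 2 * lam t * frobSq (V t) + (q : ℝ) * c ^ 2 * lam t / R) := by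
    intro t ht
    have hbase : max 0 (l1norm (yt t - ynn t)
          - (l2normSq ((V t)ᵀ.mulVec (Pᵀ.mulVec (x t)) - (V t)ᵀ.mulVec (ynn t))
              - l2normSq ((V t)ᵀ.mulVec (Pᵀ.mulVec (x t)) - (V t)ᵀ.mulVec (yt t))))
        ≤ R * frobSq (V t) + q := by
      have hL1 : l1norm (yt t - ynn t) ≤ (q : ℝ) := by
        unfold l1norm
        calc ∑ i, |(yt t - ynn t) i| ≤ ∑ i : Fin q, (1 : ℝ) := by
              apply Finset.sum_le_sum; intro i _
              rcases hyt t ht i with h1 | h1 <;> rcases hynn t ht i with h2 | h2 <;>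
                simp [Pi.sub_apply, h1, h2]
          _ = q := by simp
      have hB : l2normSq ((V t)ᵀ.mulVec (Pᵀ.mulVec (x t)) - (V t)ᵀ.mulVec (yt t))
          ≤ frobSq (V t) * R := by
        have heq : (V t)ᵀ.mulVec (Pᵀ.mulVec (x t)) - (V t)ᵀ.mulVec (yt t)
            = (V t)ᵀ.mulVec (Pᵀ.mulVec (x t) - yt t) := by
          rw [Matrix.mulVec_sub]
        rw [heq]
        calc l2normSq ((V t)ᵀ.mulVec (Pᵀ.mulVec (x t) - yt t))
            ≤ frobSq (V t) * l2normSq (Pᵀ.mulVec (x t) - yt t) := cs_bound _ _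
          _ ≤ frobSq (V t) * R :=
              mul_le_mul_of_nonneg_left (hPx t ht) (frobSq_nonneg _)
      have hA : 0 ≤ l2normSq ((V t)ᵀ.mulVec (Pᵀ.mulVec (x t)) - (V t)ᵀ.mulVec (ynn t)) :=
        l2normSq_nonneg _
      have hRfV : 0 ≤ R * frobSq (V t) := mul_nonneg hR.le (frobSq_nonneg _)
      apply max_le
      · positivity
      · nlinarith
    have hfac : (1 : ℝ) ≤ lam t / m := (one_le_div hm).mpr (hlam t ht)
    have hbase2 : R * frobSq (V t) + q ≤ (lam t / m) * (R * frobSq (V t) + q) := by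
      have h0 : 0 ≤ R * frobSq (V t) + q := by
        have := mul_nonneg hR.le (frobSq_nonneg (V t))
        have : (0:ℝ) ≤ q := Nat.cast_nonneg q
        positivity
      exact le_mul_of_one_le_left h0 hfac
    have heq : (lam t / m) * (R * frobSq (V t) + q)
        = (R / (m * c ^ 2)) * (c ^ 2 * lam t * frobSq (V t) + (q : ℝ) * c ^ 2 * lam t / R) := by
      field_simp
    exact hbase.trans (hbase2.trans heq.le)
  have hsum := Finset.sum_le_sum key
  have hsum2 : ∑ t ∈ Finset.Icc 1 T,
      (R / (m * c ^ 2)) * (c ^ 2 * lam t * frobSq (V t) + (q : ℝ) * c ^ 2 * lam t / R)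
      ≤ (R / (m * c ^ 2)) * frobSq (V 1 - U) := by
    rw [← Finset.mul_sum]
    apply mul_le_mul_of_nonneg_left _ (by positivity)
    calc ∑ t ∈ Finset.Icc 1 T,
          (c ^ 2 * lam t * frobSq (V t) + (q : ℝ) * c ^ 2 * lam t / R)
        ≤ ∑ t ∈ Finset.Icc 1 T, (frobSq (V t - U) - frobSq (V (t + 1) - U)) :=
          Finset.sum_le_sum hprog
      _ = frobSq (V 1 - U) - frobSq (V (T + 1) - U) := tele _ T
      _ ≤ frobSq (V 1 - U) := by linarith [frobSq_nonneg (V (T + 1) - U)]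
  calc _ ≤ _ := hsum
    _ ≤ (R / (m * c ^ 2)) * frobSq (V 1 - U) := hsum2
    _ = frobSq (V 1 - U) * R / (m * c ^ 2) := by ring
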